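/- (G₂ sequence.) On ℝ⁴ (d = 4, no dilatons) consider the four wall forms w_{−1} = e₄ − e₃, w₀ = e₃ − e₂, w₁ = e₂ − e₁ (symmetry walls) and w₂ = e₁ (electric wall of the 1-form). Then (w_{−1}|w_{−1}) = (w₀|w₀) = (w₁|w₁) = 2 and (w₂|w₂) = 2/3, and the Cartan matrix A_{ij} = 2(w_i|w_j)/(w_i|w_i) equals the 4×4 matrix with rows (2,−1,0,0), (−1,2,−1,0), (0,−1,2,−1), (0,0,−3,2) in the ordering (w_{−1}, w₀, w₁, w₂). This is the generalized Cartan matrix of the hyperbolic overextension G₂^∧∧. -/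

import Mathlib

/-- The wall scalar product on `ℝ^d` (no dilatons):
`(w|w') = Σᵢ wᵢw'ᵢ − (1/(d−1)) (Σᵢ wᵢ)(Σᵢ w'ᵢ)`. -/
noncomputable def wallIP (d : ℕ) (w w' : Fin d → ℝ) : ℝ :=
  (∑ i, w i * w' i) - (1 / ((d : ℝ) - 1)) * (∑ i, w i) * (∑ i, w' i)

theorem G2_billiard (w : Fin 4 → Fin 4 → ℝ)
    (hw0 : w 0 = fun l => (if l.val = 3 then (1 : ℝ) else 0)
      - (if l.val = 2 then 1 else 0))
    (hw1 : w 1 = fun l => (if l.val = 2 then (1 : ℝ) else 0)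
      - (if l.val = 1 then 1 else 0))
    (hw2 : w 2 = fun l => (if l.val = 1 then (1 : ℝ) else 0)
      - (if l.val = 0 then 1 else 0))
    (hw3 : w 3 = fun l => if l.val = 0 then (1 : ℝ) else 0)
    (A : Fin 4 → Fin 4 → ℝ)
    (hA : ∀ i j, A i j = 2 * wallIP 4 (w i) (w j) / wallIP 4 (w i) (w i)) :
    wallIP 4 (w 0) (w 0) = 2 ∧ wallIP 4 (w 1) (w 1) = 2 ∧
    wallIP 4 (w 2) (w 2) = 2 ∧ wallIP 4 (w 3) (w 3) = 2 / 3 ∧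
    (∀ i j, A i j =
      (!![2, -1, 0, 0;
          -1, 2, -1, 0;
          0, -1, 2, -1;
          0, 0, -3, 2] : Matrix (Fin 4) (Fin 4) ℝ) i j) := by
  have f0 : ((0 : Fin 4) : ℕ) = 0 := rfl
  have f1 : ((1 : Fin 4) : ℕ) = 1 := rfl
  have f2 : ((2 : Fin 4) : ℕ) = 2 := rfl
  have f3 : ((3 : Fin 4) : ℕ) = 3 := rfl
  have h00 : wallIP 4 (w 0) (w 0) = 2 := by
    rw [hw0]; simp only [wallIP, Fin.sum_univ_four, f0, f1, f2, f3]; norm_num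
  have h11 : wallIP 4 (w 1) (w 1) = 2 := by
    rw [hw1]; simp only [wallIP, Fin.sum_univ_four, f0, f1, f2, f3]; norm_num
  have h22 : wallIP 4 (w 2) (w 2) = 2 := by
    rw [hw2]; simp only [wallIP, Fin.sum_univ_four, f0, f1, f2, f3]; norm_num
  have h33 : wallIP 4 (w 3) (w 3) = 2 / 3 := by
    rw [hw3]; simp only [wallIP, Fin.sum_univ_four, f0, f1, f2, f3]; norm_num
  have h01 : wallIP 4 (w 0) (w 1) = -1 := by
    rw [hw0, hw1]; simp only [wallIP, Fin.sum_univ_four, f0, f1, f2, f3]; norm_num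
  have h02 : wallIP 4 (w 0) (w 2) = 0 := by
    rw [hw0, hw2]; simp only [wallIP, Fin.sum_univ_four, f0, f1, f2, f3]; norm_num
  have h03 : wallIP 4 (w 0) (w 3) = 0 := by
    rw [hw0, hw3]; simp only [wallIP, Fin.sum_univ_four, f0, f1, f2, f3]; norm_num
  have h10 : wallIP 4 (w 1) (w 0) = -1 := by
    rw [hw1, hw0]; simp only [wallIP, Fin.sum_univ_four, f0, f1, f2, f3]; norm_num
  have h12 : wallIP 4 (w 1) (w 2) = -1 := by
    rw [hw1, hw2]; simp only [wallIP, Fin.sum_univ_four, f0, f1, f2, f3]; norm_num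
  have h13 : wallIP 4 (w 1) (w 3) = 0 := by
    rw [hw1, hw3]; simp only [wallIP, Fin.sum_univ_four, f0, f1, f2, f3]; norm_num
  have h20 : wallIP 4 (w 2) (w 0) = 0 := by
    rw [hw2, hw0]; simp only [wallIP, Fin.sum_univ_four, f0, f1, f2, f3]; norm_num
  have h21 : wallIP 4 (w 2) (w 1) = -1 := by
    rw [hw2, hw1]; simp only [wallIP, Fin.sum_univ_four, f0, f1, f2, f3]; norm_num
  have h23 : wallIP 4 (w 2) (w 3) = -1 := by
    rw [hw2, hw3]; simp only [wallIP, Fin.sum_univ_four, f0, f1, f2, f3]; norm_num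
  have h30 : wallIP 4 (w 3) (w 0) = 0 := by
    rw [hw3, hw0]; simp only [wallIP, Fin.sum_univ_four, f0, f1, f2, f3]; norm_num
  have h31 : wallIP 4 (w 3) (w 1) = 0 := by
    rw [hw3, hw1]; simp only [wallIP, Fin.sum_univ_four, f0, f1, f2, f3]; norm_num
  have h32 : wallIP 4 (w 3) (w 2) = -1 := by
    rw [hw3, hw2]; simp only [wallIP, Fin.sum_univ_four, f0, f1, f2, f3]; norm_num
  refine ⟨h00, h11, h22, h33, ?_⟩
  intro i j
  have hi : i = 0 ∨ i = 1 ∨ i = 2 ∨ i = 3 := by omega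
  have hj : j = 0 ∨ j = 1 ∨ j = 2 ∨ j = 3 := by omega
  rcases hi with rfl | rfl | rfl | rfl <;> rcases hj with rfl | rfl | rfl | rfl <;>
    rw [hA] <;>
    simp only [h00, h01, h02, h03, h10, h11, h12, h13, h20, h21, h22, h23,
      h30, h31, h32, h33] <;>
    norm_num [Matrix.cons_val_zero, Matrix.cons_val_one, Matrix.head_cons,
      Matrix.cons_val_fin_one, Matrix.cons_val', Matrix.empty_val',
      Matrix.vecHead, Matrix.vecTail] <;>
    rfl
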